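/- Let R be a ring and let ζ : Q₀ → Q₁ be a homomorphism of right R-modules with Q₁ injective, and let T = Ker(ζ). If 0 → A → B → X → 0 is a short exact sequence of right R-modules such that A ∈ 𝓑_ζ, B ∈ 𝓑_ζ and Ext¹_R(X,T) = 0, then X ∈ 𝓑_ζ. -/

import Mathlib

universe u v

open Function

variable (R : Type u) [Ring R]

/-- `X ∈ 𝓑_ζ`: every map `X → Q₁` factors through `ζ`. -/
def MemB {Q₀ Q₁ : Type v} [AddCommGroup Q₀] [Module R Q₀] [AddCommGroup Q₁] [Module R Q₁]
    (ζ : Q₀ →ₗ[R] Q₁) (X : Type v) [AddCommGroup X] [Module R X] : Prop :=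
  Surjective fun g : X →ₗ[R] Q₀ => ζ ∘ₗ g

/-- `Ext¹_R(X,T) = 0`, expressed as: every short exact sequence `0 → T → Y → X → 0` splits. -/
def Ext1Vanishes (X T : Type v) [AddCommGroup X] [Module R X] [AddCommGroup T] [Module R T] :
    Prop :=
  ∀ (Y : Type v) [AddCommGroup Y] [Module R Y] (i : T →ₗ[R] Y) (p : Y →ₗ[R] X),
    Injective i → Surjective p → LinearMap.range i = LinearMap.ker p →
    ∃ s : X →ₗ[R] Y, p ∘ₗ s = LinearMap.id

/-- If `Q₁` is injective, `T = Ker ζ`, and `0 → A → B → X → 0` is exact with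
`A, B ∈ 𝓑_ζ` and `Ext¹(X, T) = 0`, then `X ∈ 𝓑_ζ`. -/
theorem stmt_3 {Q₀ Q₁ : Type v} [AddCommGroup Q₀] [Module R Q₀] [AddCommGroup Q₁] [Module R Q₁]
    (ζ : Q₀ →ₗ[R] Q₁) [Module.Injective R Q₁]
    (A B X : Type v) [AddCommGroup A] [Module R A] [AddCommGroup B] [Module R B]
    [AddCommGroup X] [Module R X]
    (f : A →ₗ[R] B) (g : B →ₗ[R] X) (hf : Injective f) (hg : Surjective g)
    (hex : LinearMap.range f = LinearMap.ker g)
    (hA : MemB R ζ A) (hB : MemB R ζ B)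
    (hX : Ext1Vanishes R X ↥(LinearMap.ker ζ)) : MemB R ζ X := by
  intro φ
  obtain ⟨β, hβ⟩ := hB (φ ∘ₗ g)
  simp only at hβ
  have hgf : ∀ a, g (f a) = 0 := by
    intro a
    have : f a ∈ LinearMap.ker g := hex ▸ LinearMap.mem_range_self f a
    exact this
  have hmem : ∀ a, β (f a) ∈ LinearMap.ker ζ := by
    intro a
    have h1 : ζ (β (f a)) = φ (g (f a)) := congrFun (congrArg DFunLike.coe hβ) (f a)
    simp [LinearMap.mem_ker, h1, hgf a]
  set T := ↥(LinearMap.ker ζ)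
  set k : A →ₗ[R] T × B :=
    LinearMap.prod (-(LinearMap.codRestrict (LinearMap.ker ζ) (β ∘ₗ f) hmem)) f with hk
  set K := LinearMap.range k with hK
  set Y := (T × B) ⧸ K with hY
  set i : T →ₗ[R] Y := K.mkQ ∘ₗ LinearMap.inl R T B with hi
  have hpker : K ≤ LinearMap.ker (g ∘ₗ LinearMap.snd R T B) := by
    rintro _ ⟨a, rfl⟩
    simp [hk, hgf a]
  set p : Y →ₗ[R] X := K.liftQ (g ∘ₗ LinearMap.snd R T B) hpker with hp
  have hi_inj : Injective i := by
    rw [injective_iff_map_eq_zero]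
    intro t ht
    have ht0 : Submodule.Quotient.mk (p := K) ((t, 0) : T × B) = 0 := ht
    have : ((t, 0) : T × B) ∈ K := (Submodule.Quotient.mk_eq_zero K).mp ht0
    obtain ⟨a, ha⟩ := this
    have hfa : f a = 0 := congrArg Prod.snd ha
    have ha0 : a = 0 := hf (by simpa using hfa)
    have := congrArg Prod.fst ha
    simp [hk, ha0] at this
    exact this.symm
  have hp_surj : Surjective p := by
    intro x
    obtain ⟨b, rfl⟩ := hg x
    exact ⟨K.mkQ (0, b), rfl⟩
  have hrange : LinearMap.range i = LinearMap.ker p := by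
    apply le_antisymm
    · rintro _ ⟨t, rfl⟩
      exact LinearMap.mem_ker.mpr (show g 0 = 0 from map_zero g)
    · rintro y hy
      obtain ⟨⟨t, b⟩, rfl⟩ := K.mkQ_surjective y
      have hgb : g b = 0 := hy
      have : b ∈ LinearMap.range f := hex ▸ hgb
      obtain ⟨a, rfl⟩ := this
      refine ⟨t + ⟨β (f a), hmem a⟩, ?_⟩
      have hdiff : ((t + ⟨β (f a), hmem a⟩, 0) : T × B) - (t, f a) ∈ K :=
        ⟨-a, by
          refine Prod.ext ?_ ?_
          · refine Subtype.ext ?_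
            simp [hk]
          · simp [hk]⟩
      simp only [hi, LinearMap.comp_apply, LinearMap.inl_apply]
      exact (Submodule.Quotient.eq K).mpr hdiff
  obtain ⟨s, hs⟩ := hX Y i p hi_inj hp_surj hrange
  have hqker : K ≤ LinearMap.ker
      ((LinearMap.ker ζ).subtype ∘ₗ LinearMap.fst R T B + β ∘ₗ LinearMap.snd R T B) := by
    rintro _ ⟨a, rfl⟩
    simp [hk]
  set q : Y →ₗ[R] Q₀ := K.liftQ _ hqker with hq
  refine ⟨q ∘ₗ s, ?_⟩
  ext x
  obtain ⟨⟨t, b⟩, hrep⟩ := K.mkQ_surjective (s x)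
  have hx : g b = x := by
    have h1 := congrFun (congrArg DFunLike.coe hs) x
    simp only [LinearMap.comp_apply, LinearMap.id_apply] at h1
    rw [← hrep] at h1
    exact h1
  have ht : ζ (t : Q₀) = 0 := t.2
  have hζβ : ζ (β b) = φ (g b) := congrFun (congrArg DFunLike.coe hβ) b
  show (ζ ∘ₗ (q ∘ₗ s)) x = φ x
  simp only [LinearMap.comp_apply]
  rw [← hrep]
  show ζ ((t : Q₀) + β b) = φ x
  rw [map_add, ht, hζβ, hx, zero_add]
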